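/- arXiv:1109.1169 — 3 statements merged into one kernel-verified Lean document; each statement's English description precedes it below -/
import Mathlib

section
/- For α, β > -1, the inner product of two Bernstein polynomials with respect to the Jacobi weight is given by ⟨B^n_i, B^m_j⟩ = B(α+1, β+1) · C(n,i) · C(m,j) · (α+1)_{n+m-i-j} (β+1)_{i+j} / (α+β+2)_{n+m}, where B(λ,μ) = Γ(λ)Γ(μ)/Γ(λ+μ) and (c)_k denotes the Pochhammer symbol. -/
open Finset

/-- Pochhammer symbol `(c)_k = c (c+1) ⋯ (c+k-1)`. -/
noncomputable def poch (c : ℝ) (k : ℕ) : ℝ := ∏ j ∈ Finset.range k, (c + j)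

/-- Bernstein polynomial `B^n_i(x)`. -/
noncomputable def bern (n i : ℕ) (x : ℝ) : ℝ := (n.choose i : ℝ) * x ^ i * (1 - x) ^ (n - i)

/-- Jacobi inner product on [0,1]. -/
noncomputable def jip (α β : ℝ) (f g : ℝ → ℝ) : ℝ :=
  ∫ x in (0:ℝ)..1, (1 - x) ^ α * x ^ β * f x * g x

/-- Beta function `B(a,b) = Γ(a)Γ(b)/Γ(a+b)`. -/
noncomputable def betaF (a b : ℝ) : ℝ := Real.Gamma a * Real.Gamma b / Real.Gamma (a + b)

/-- Hahn polynomial `Q_m(x; α, β, N)` as a terminating ₃F₂ sum. -/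
noncomputable def hahn (m : ℕ) (x : ℝ) (α β : ℝ) (N : ℕ) : ℝ :=
  ∑ k ∈ Finset.range (m + 1),
    poch (-(m : ℝ)) k * poch ((m : ℝ) + α + β + 1) k * poch (-x) k /
      ((k.factorial : ℝ) * poch (α + 1) k * poch (-(N : ℝ)) k)

/-- Shifted Jacobi polynomial `R_m^{(α,β)}(x)`. -/
noncomputable def sjac (m : ℕ) (α β : ℝ) (x : ℝ) : ℝ :=
  (poch (α + 1) m / (m.factorial : ℝ)) *
    ∑ k ∈ Finset.range (m + 1),
      poch (-(m : ℝ)) k * poch ((m : ℝ) + α + β + 1) k /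
        ((k.factorial : ℝ) * poch (α + 1) k) * (1 - x) ^ k


open MeasureTheory in
lemma Gamma_add_nat' (c : ℝ) (hc : 0 < c) (k : ℕ) :
    Real.Gamma (c + k) = poch c k * Real.Gamma c := by
  induction k with
  | zero => simp [poch]
  | succ k ih =>
    have h1 : c + (k + 1 : ℕ) = (c + k) + 1 := by push_cast; ring
    rw [h1, Real.Gamma_add_one (by positivity), ih]
    simp only [poch, Finset.prod_range_succ]
    ring

lemma poch_pos' (c : ℝ) (hc : 0 < c) (k : ℕ) : 0 < poch c k :=
  Finset.prod_pos fun j _ => by positivity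

lemma real_beta' (a b : ℝ) (ha : 0 < a) (hb : 0 < b) :
    ∫ x in (0:ℝ)..1, x ^ (a - 1) * (1 - x) ^ (b - 1) =
      Real.Gamma a * Real.Gamma b / Real.Gamma (a + b) := by
  have key := Complex.Gamma_mul_Gamma_eq_betaIntegral (s := (a : ℂ)) (t := (b : ℂ))
    (by simpa using ha) (by simpa using hb)
  have hint : Complex.betaIntegral (a : ℂ) (b : ℂ) =
      ((∫ x in (0:ℝ)..1, x ^ (a - 1) * (1 - x) ^ (b - 1) : ℝ) : ℂ) := by
    rw [Complex.betaIntegral, ← intervalIntegral.integral_ofReal]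
    refine intervalIntegral.integral_congr fun x hx => ?_
    rw [Set.uIcc_of_le (by norm_num)] at hx
    rw [Complex.ofReal_mul, Complex.ofReal_cpow hx.1,
      Complex.ofReal_cpow (by linarith [hx.2] : (0:ℝ) ≤ 1 - x)]
    push_cast
    ring
  rw [hint, ← Complex.ofReal_add, Complex.Gamma_ofReal, Complex.Gamma_ofReal,
    Complex.Gamma_ofReal, ← Complex.ofReal_mul, ← Complex.ofReal_mul] at key
  have h := Complex.ofReal_inj.mp key
  have hG : Real.Gamma (a + b) ≠ 0 := (Real.Gamma_pos_of_pos (by linarith)).ne'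
  field_simp
  linarith [h]

theorem jacobi_inner_product_of_bernstein (α β : ℝ) (hα : α > -1) (hβ : β > -1)
    (n m i j : ℕ) (hi : i ≤ n) (hj : j ≤ m) :
    jip α β (bern n i) (bern m j) =
      betaF (α + 1) (β + 1) * (n.choose i : ℝ) * (m.choose j : ℝ) *
        poch (α + 1) (n + m - i - j) * poch (β + 1) (i + j) / poch (α + β + 2) (n + m) := by
  have hij : (0:ℝ) ≤ ((i + j : ℕ) : ℝ) := Nat.cast_nonneg _
  have hnm : (0:ℝ) ≤ ((n + m - i - j : ℕ) : ℝ) := Nat.cast_nonneg _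
  have ha : (0:ℝ) < β + 1 + ((i + j : ℕ) : ℝ) := by linarith
  have hb : (0:ℝ) < α + 1 + ((n + m - i - j : ℕ) : ℝ) := by linarith
  have step1 : jip α β (bern n i) (bern m j) =
      (n.choose i : ℝ) * (m.choose j : ℝ) *
      ∫ x in (0:ℝ)..1, x ^ ((β + 1 + ((i + j : ℕ) : ℝ)) - 1) *
        (1 - x) ^ ((α + 1 + ((n + m - i - j : ℕ) : ℝ)) - 1) := by
    rw [jip, ← intervalIntegral.integral_const_mul]
    refine intervalIntegral.integral_congr_ae ?_
    filter_upwards [MeasureTheory.compl_mem_ae_iff.mpr (MeasureTheory.measure_singleton (1:ℝ))]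
      with x hx1 hx
    rw [Set.uIoc_of_le (by norm_num)] at hx
    have hx0 : 0 < x := hx.1
    have hx1' : x < 1 := lt_of_le_of_ne hx.2 hx1
    have h1x : 0 < 1 - x := by linarith
    have e1 : x ^ ((β + 1 + ((i + j : ℕ) : ℝ)) - 1) = x ^ β * (x ^ i * x ^ j) := by
      rw [show (β + 1 + ((i + j : ℕ) : ℝ)) - 1 = β + ((i + j : ℕ) : ℝ) by ring,
        Real.rpow_add hx0, Real.rpow_natCast, pow_add]
    have e2 : (1 - x) ^ ((α + 1 + ((n + m - i - j : ℕ) : ℝ)) - 1) =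
        (1 - x) ^ α * ((1 - x) ^ (n - i) * (1 - x) ^ (m - j)) := by
      rw [show (α + 1 + ((n + m - i - j : ℕ) : ℝ)) - 1 = α + ((n + m - i - j : ℕ) : ℝ) by ring,
        Real.rpow_add h1x, Real.rpow_natCast, show n + m - i - j = (n - i) + (m - j) by omega,
        pow_add]
    rw [bern, bern, e1, e2]
    ring
  rw [step1, real_beta' _ _ ha hb]
  have hβ1 : (0:ℝ) < β + 1 := by linarith
  have hα1 : (0:ℝ) < α + 1 := by linarith
  have hαβ : (0:ℝ) < α + β + 2 := by linarith
  have h2 : ((i + j : ℕ) : ℝ) + ((n + m - i - j : ℕ) : ℝ) = ((n + m : ℕ) : ℝ) := by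
    rw [← Nat.cast_add]; congr 1; omega
  have hsum : (β + 1 + ((i + j : ℕ) : ℝ)) + (α + 1 + ((n + m - i - j : ℕ) : ℝ)) =
      (α + β + 2) + ((n + m : ℕ) : ℝ) := by linarith
  rw [Gamma_add_nat' _ hβ1, Gamma_add_nat' _ hα1, hsum, Gamma_add_nat' _ hαβ, betaF]
  have hG : Real.Gamma (α + β + 2) ≠ 0 := (Real.Gamma_pos_of_pos hαβ).ne'
  have hP : poch (α + β + 2) (n + m) ≠ 0 := (poch_pos' _ hαβ _).ne'
  rw [show α + 1 + (β + 1) = α + β + 2 by ring]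
  field_simp
end

section
/- For 0 ≤ i ≤ n, the shifted Jacobi polynomial has the Bernstein expansion R_i^{(α,β)}(x) = ((α+1)_i / i!) · Σ_{j=0}^{n} Q_i(n-j; α, β, n) · B^n_j(x). -/
open Finset

lemma poch_succ (c : ℝ) (k : ℕ) : poch c (k+1) = poch c k * (c + k) := by
  simp [poch, Finset.prod_range_succ]

lemma poch_neg_nat (m k : ℕ) :
    poch (-(m : ℝ)) k = (-1)^k * (k.factorial : ℝ) * (m.choose k : ℝ) := by
  induction k with
  | zero => simp [poch]
  | succ k ih =>
    rw [poch_succ, ih]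
    have key : (k.factorial : ℝ) * (m.choose k : ℝ) * ((m:ℝ) - k)
        = ((k+1).factorial : ℝ) * (m.choose (k+1) : ℝ) := by
      rcases lt_trichotomy k m with h | h | h
      · have := Nat.choose_succ_right_eq m k
        have hcast : (m.choose (k+1) : ℝ) * (k+1) = (m.choose k : ℝ) * ((m:ℝ) - k) := by
          have h2 : ((m - k : ℕ) : ℝ) = (m:ℝ) - k := by
            have : k ≤ m := h.le
            push_cast [this]; ring
          rw [← h2]
          exact_mod_cast congrArg (Nat.cast : ℕ → ℝ) this
        rw [Nat.factorial_succ]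
        push_cast
        nlinarith [hcast]
      · subst h
        simp [Nat.choose_eq_zero_of_lt (Nat.lt_succ_self k)]
      · rw [Nat.choose_eq_zero_of_lt h, Nat.choose_eq_zero_of_lt (h.trans (Nat.lt_succ_self k))]
        simp
    calc (-1)^k * (k.factorial : ℝ) * (m.choose k : ℝ) * (-(m:ℝ) + k)
        = (-1)^(k+1) * ((k.factorial : ℝ) * (m.choose k : ℝ) * ((m:ℝ) - k)) := by ring
      _ = (-1)^(k+1) * ((k+1).factorial : ℝ) * (m.choose (k+1) : ℝ) := by rw [key]; ring

lemma choose_swap (n j k : ℕ) (hk : k ≤ n) :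
    (n - j).choose k * n.choose j = n.choose k * (n - k).choose j := by
  by_cases h : j + k ≤ n
  · have h1 := Nat.choose_mul (n := n) (Nat.le_add_right j k)
    have h2 := Nat.choose_mul (n := n) (Nat.le_add_left k j)
    have hs : (j + k).choose j = (j + k).choose k := by
      rw [← Nat.choose_symm (Nat.le_add_left k j)]
      congr 1; omega
    have e1 : j + k - j = k := by omega
    have e2 : j + k - k = j := by omega
    rw [e1] at h1; rw [e2] at h2
    calc (n - j).choose k * n.choose j = n.choose (j+k) * (j+k).choose j := by
          rw [h1]; ring
      _ = n.choose (j+k) * (j+k).choose k := by rw [hs]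
      _ = n.choose k * (n - k).choose j := h2
  · push_neg at h
    by_cases hj : j ≤ n
    · rw [Nat.choose_eq_zero_of_lt (by omega : n - j < k),
        Nat.choose_eq_zero_of_lt (by omega : n - k < j)]
      simp
    · rw [Nat.choose_eq_zero_of_lt (by omega : n < j),
        Nat.choose_eq_zero_of_lt (by omega : n - k < j)]
      simp

lemma bern_sum (n k : ℕ) (hk : k ≤ n) (x : ℝ) :
    ∑ j ∈ Finset.range (n+1), ((n-k).choose j : ℝ) * x^j * (1-x)^(n-j) = (1-x)^k := by
  rw [← Finset.sum_subset (Finset.range_subset_range.2 (by omega : n - k + 1 ≤ n + 1))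
    (fun j _ hj => by
      rw [Nat.choose_eq_zero_of_lt (by simp [Finset.mem_range] at hj; omega)]
      simp)]
  have : ∀ j ∈ Finset.range (n - k + 1),
      ((n-k).choose j : ℝ) * x^j * (1-x)^(n-j)
      = (x^j * (1-x)^((n-k)-j) * ((n-k).choose j : ℝ)) * (1-x)^k := by
    intro j hj
    simp only [Finset.mem_range] at hj
    have : n - j = ((n - k) - j) + k := by omega
    rw [this, pow_add]; ring
  rw [Finset.sum_congr rfl this, ← Finset.sum_mul, ← add_pow]
  simp

theorem jacobi_in_bernstein_basis (α β : ℝ) (n i : ℕ) (hi : i ≤ n) (x : ℝ) :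
    sjac i α β x =
      (poch (α + 1) i / (i.factorial : ℝ)) *
        ∑ j ∈ Finset.range (n + 1), hahn i ((n : ℝ) - (j : ℝ)) α β n * bern n j x := by
  rw [sjac]
  congr 1
  rw [eq_comm]
  calc ∑ j ∈ Finset.range (n+1), hahn i ((n:ℝ) - j) α β n * bern n j x
      = ∑ j ∈ Finset.range (n+1), ∑ k ∈ Finset.range (i+1),
          poch (-(i:ℝ)) k * poch ((i:ℝ) + α + β + 1) k * poch (-((n:ℝ) - j)) k /
            ((k.factorial : ℝ) * poch (α+1) k * poch (-(n:ℝ)) k) * bern n j x := by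
        refine Finset.sum_congr rfl fun j hj => ?_
        rw [hahn, Finset.sum_mul]
    _ = ∑ k ∈ Finset.range (i+1), ∑ j ∈ Finset.range (n+1),
          poch (-(i:ℝ)) k * poch ((i:ℝ) + α + β + 1) k * poch (-((n:ℝ) - j)) k /
            ((k.factorial : ℝ) * poch (α+1) k * poch (-(n:ℝ)) k) * bern n j x :=
        Finset.sum_comm
    _ = ∑ k ∈ Finset.range (i+1),
          poch (-(i:ℝ)) k * poch ((i:ℝ) + α + β + 1) k /
            ((k.factorial : ℝ) * poch (α+1) k) * (1-x)^k := by
        refine Finset.sum_congr rfl fun k hk => ?_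
        have hkn : k ≤ n := by
          simp only [Finset.mem_range] at hk; omega
        have hC : (0:ℝ) < (n.choose k : ℝ) := by exact_mod_cast Nat.choose_pos hkn
        have ht : ((-1:ℝ)^k * (k.factorial : ℝ)) ≠ 0 :=
          mul_ne_zero (pow_ne_zero _ (by norm_num))
            (Nat.cast_ne_zero.2 k.factorial_ne_zero)
        have step : ∀ j ∈ Finset.range (n+1),
            poch (-(i:ℝ)) k * poch ((i:ℝ) + α + β + 1) k * poch (-((n:ℝ) - j)) k /
              ((k.factorial : ℝ) * poch (α+1) k * poch (-(n:ℝ)) k) * bern n j x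
            = poch (-(i:ℝ)) k * poch ((i:ℝ) + α + β + 1) k /
                ((k.factorial : ℝ) * poch (α+1) k) *
                (((n-k).choose j : ℝ) * x^j * (1-x)^(n-j)) := by
          intro j hj
          have hjn : j ≤ n := by simp only [Finset.mem_range] at hj; omega
          have e1 : -((n:ℝ) - j) = -(((n - j : ℕ)):ℝ) := by
            push_cast [Nat.cast_sub hjn]; ring
          rw [bern, e1, poch_neg_nat (n - j) k, poch_neg_nat n k]
          set A := poch (-(i:ℝ)) k * poch ((i:ℝ) + α + β + 1) k with hA
          set P := poch (α+1) k with hP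
          have hcc : ((n-j).choose k : ℝ) * (n.choose j : ℝ)
              = (n.choose k : ℝ) * ((n-k).choose j : ℝ) := by
            exact_mod_cast congrArg (Nat.cast : ℕ → ℝ) (choose_swap n j k hkn)
          have h1 : A * ((-1)^k * (k.factorial:ℝ) * ((n-j).choose k : ℝ)) /
              ((k.factorial:ℝ) * P * ((-1)^k * (k.factorial:ℝ) * (n.choose k : ℝ)))
              = A * ((n-j).choose k : ℝ) /
                ((k.factorial:ℝ) * P * (n.choose k : ℝ)) := by
            rw [show A * ((-1)^k * (k.factorial:ℝ) * ((n-j).choose k : ℝ))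
                  = ((-1)^k * (k.factorial:ℝ)) * (A * ((n-j).choose k : ℝ)) by ring,
                show (k.factorial:ℝ) * P * ((-1)^k * (k.factorial:ℝ) * (n.choose k : ℝ))
                  = ((-1)^k * (k.factorial:ℝ)) * ((k.factorial:ℝ) * P * (n.choose k : ℝ)) by ring,
                mul_div_mul_left _ _ ht]
          rw [h1]
          calc A * ((n-j).choose k : ℝ) / ((k.factorial:ℝ) * P * (n.choose k : ℝ)) *
                ((n.choose j : ℝ) * x^j * (1-x)^(n-j))
              = A / ((k.factorial:ℝ) * P) *
                ((((n-j).choose k : ℝ) * (n.choose j : ℝ)) / (n.choose k : ℝ) *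
                  (x^j * (1-x)^(n-j))) := by ring
            _ = A / ((k.factorial:ℝ) * P) *
                (((n.choose k : ℝ) * ((n-k).choose j : ℝ)) / (n.choose k : ℝ) *
                  (x^j * (1-x)^(n-j))) := by rw [hcc]
            _ = A / ((k.factorial:ℝ) * P) *
                (((n-k).choose j : ℝ) * x^j * (1-x)^(n-j)) := by
                rw [mul_div_cancel_left₀ _ hC.ne']; ring
        rw [Finset.sum_congr rfl step, ← Finset.mul_sum, bern_sum n k hkn x]
end

section
/- For i = k, ..., n-l, the constrained dual Bernstein polynomial factors as D^{(n,k,l)}_i(x; α, β) = U_i · x^k (1-x)^l · D^{n-k-l}_{i-k}(x; α+2l, β+2k), where U_i = C(n-k-l, i-k) / C(n, i). -/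
open Finset MeasureTheory intervalIntegral

lemma bern_continuous (n i : ℕ) : Continuous (bern n i) := by
  unfold bern
  exact (continuous_const.mul (continuous_pow i)).mul
    (((continuous_const.sub continuous_id).pow _))

lemma wInt_half (a b : ℝ) (hb : -1 < b) :
    IntervalIntegrable (fun x : ℝ => (1 - x) ^ a * x ^ b) volume 0 (1/2) := by
  have h1 : IntervalIntegrable (fun x : ℝ => x ^ b) volume 0 (1/2) :=
    intervalIntegral.intervalIntegrable_rpow' hb
  have h2 : ContinuousOn (fun x : ℝ => (1 - x) ^ a) (Set.uIcc 0 (1/2)) := by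
    apply ContinuousOn.rpow_const (continuous_const.sub continuous_id).continuousOn
    intro x hx
    left
    rw [Set.uIcc_of_le (by norm_num)] at hx
    have h2 := hx.2
    intro h
    simp only [Pi.sub_apply, id_eq] at h
    linarith
  exact h1.continuousOn_mul h2

lemma wInt (a b : ℝ) (ha : -1 < a) (hb : -1 < b) :
    IntervalIntegrable (fun x : ℝ => (1 - x) ^ a * x ^ b) volume 0 1 := by
  have h1 := wInt_half a b hb
  have h2 := (wInt_half b a ha).comp_sub_left 1
  norm_num at h2
  have hfe : (fun x : ℝ => x ^ b * (1 - x) ^ a)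
      = fun x : ℝ => (1 - x) ^ a * x ^ b := by
    funext x; ring
  rw [hfe] at h2
  exact h1.trans h2.symm

lemma jipInt (a b : ℝ) (ha : -1 < a) (hb : -1 < b) {f g : ℝ → ℝ}
    (hf : Continuous f) (hg : Continuous g) :
    IntervalIntegrable (fun x : ℝ => (1 - x) ^ a * x ^ b * f x * g x) volume 0 1 :=
  ((wInt a b ha hb).mul_continuousOn hf.continuousOn).mul_continuousOn hg.continuousOn

lemma jip_const_mul (a b c : ℝ) (f g : ℝ → ℝ) :
    jip a b (fun x => c * f x) g = c * jip a b f g := by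
  unfold jip
  rw [← intervalIntegral.integral_const_mul]
  apply intervalIntegral.integral_congr
  intro x _
  ring

lemma jip_sub (a b : ℝ) (ha : -1 < a) (hb : -1 < b) {f₁ f₂ g : ℝ → ℝ}
    (h1 : Continuous f₁) (h2 : Continuous f₂) (hg : Continuous g) :
    jip a b (fun x => f₁ x - f₂ x) g = jip a b f₁ g - jip a b f₂ g := by
  unfold jip
  rw [← intervalIntegral.integral_sub (jipInt a b ha hb h1 hg) (jipInt a b ha hb h2 hg)]
  apply intervalIntegral.integral_congr
  intro x _
  ring

lemma bern_expand (m j : ℕ) (hj : j ≤ m) (x : ℝ) :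
    x ^ j = ∑ t ∈ Finset.range (m - j + 1),
      (((m - j).choose t : ℝ) / (m.choose (t + j) : ℝ)) * bern m (t + j) x := by
  have h1 : (∑ t ∈ Finset.range (m - j + 1),
      x ^ t * (1 - x) ^ (m - j - t) * ((m - j).choose t : ℝ)) = 1 := by
    have := add_pow x (1 - x) (m - j)
    simpa using this.symm
  calc x ^ j = x ^ j * 1 := (mul_one _).symm
    _ = x ^ j * ∑ t ∈ Finset.range (m - j + 1),
        x ^ t * (1 - x) ^ (m - j - t) * ((m - j).choose t : ℝ) := by rw [h1]
    _ = ∑ t ∈ Finset.range (m - j + 1),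
        x ^ j * (x ^ t * (1 - x) ^ (m - j - t) * ((m - j).choose t : ℝ)) :=
        Finset.mul_sum _ _ _
    _ = _ := by
        apply Finset.sum_congr rfl
        intro t ht
        rw [Finset.mem_range] at ht
        have htm : t + j ≤ m := by omega
        have hch : (m.choose (t + j) : ℝ) ≠ 0 :=
          Nat.cast_ne_zero.mpr (Nat.choose_pos htm).ne'
        unfold bern
        have h2 : m - (t + j) = m - j - t := by omega
        rw [h2, pow_add]
        field_simp

lemma jip_reduce (α β : ℝ) (n k l m s : ℕ) (hm : k + l + m = n) (hs : s ≤ m) (g : ℝ → ℝ) :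
    jip α β (fun x => x ^ k * (1 - x) ^ l * g x) (bern n (s + k)) =
      ((n.choose (s + k) : ℝ) / (m.choose s : ℝ)) *
        jip (α + 2 * l) (β + 2 * k) g (bern m s) := by
  have hms : (m.choose s : ℝ) ≠ 0 := Nat.cast_ne_zero.mpr (Nat.choose_pos hs).ne'
  unfold jip
  rw [← intervalIntegral.integral_const_mul]
  apply intervalIntegral.integral_congr_ae
  have hne : ∀ᵐ x : ℝ, x ≠ 1 := by
    rw [MeasureTheory.ae_iff]
    simp only [ne_eq, not_not, Set.setOf_eq_eq_singleton]
    exact measure_singleton 1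
  filter_upwards [hne] with x hx1 hx
  rw [Set.uIoc_of_le (by norm_num : (0:ℝ) ≤ 1)] at hx
  have px : 0 < x := hx.1
  have p1x : 0 < 1 - x := sub_pos.mpr (lt_of_le_of_ne hx.2 hx1)
  unfold bern
  have hnj : n - (s + k) = l + (m - s) := by omega
  rw [hnj, pow_add x s k, pow_add (1-x) l (m - s)]
  have e1 : (1 - x) ^ (α + 2 * (l:ℝ)) = (1 - x) ^ α * ((1 - x) ^ l * (1 - x) ^ l) := by
    rw [show α + 2 * (l:ℝ) = α + ((l:ℝ) + (l:ℝ)) by ring, Real.rpow_add p1x,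
      Real.rpow_add p1x]
    simp only [Real.rpow_natCast]
  have e2 : x ^ (β + 2 * (k:ℝ)) = x ^ β * (x ^ k * x ^ k) := by
    rw [show β + 2 * (k:ℝ) = β + ((k:ℝ) + (k:ℝ)) by ring, Real.rpow_add px,
      Real.rpow_add px]
    simp only [Real.rpow_natCast]
  rw [e1, e2]
  field_simp


theorem constrained_dual_bernstein_factorization (α β : ℝ) (hα : α > -1) (hβ : β > -1)
    (n k l i : ℕ) (hkl : k + l ≤ n) (hik : k ≤ i) (hil : i ≤ n - l)
    (Dc : Polynomial ℝ) (hdeg : Dc.natDegree ≤ n)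
    (h0 : ∀ r < k, (Polynomial.derivative^[r] Dc).eval 0 = 0)
    (h1 : ∀ r < l, (Polynomial.derivative^[r] Dc).eval 1 = 0)
    (hdual : ∀ j, k ≤ j → j ≤ n - l →
      jip α β (fun x => Dc.eval x) (bern n j) = if i = j then 1 else 0)
    (Du : Polynomial ℝ) (hdegu : Du.natDegree ≤ n - k - l)
    (hdualu : ∀ s ≤ n - k - l,
      jip (α + 2 * l) (β + 2 * k) (fun x => Du.eval x) (bern (n - k - l) s) =
        if i - k = s then 1 else 0)
    (x : ℝ) :
    Dc.eval x =
      ((((n - k - l).choose (i - k) : ℝ)) / (n.choose i : ℝ)) *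
        (x ^ k * (1 - x) ^ l) * Du.eval x := by
  classical
  set m := n - k - l with hmdef
  have hmn : k + l + m = n := by omega
  have hin : i ≤ n := by omega
  have hikm : i - k ≤ m := by omega
  have hCn : (n.choose i : ℝ) ≠ 0 := Nat.cast_ne_zero.mpr (Nat.choose_pos hin).ne'
  have hCm : (m.choose (i - k) : ℝ) ≠ 0 := Nat.cast_ne_zero.mpr (Nat.choose_pos hikm).ne'
  set U : ℝ := (m.choose (i - k) : ℝ) / (n.choose i : ℝ) with hU
  set Q : Polynomial ℝ :=
    Polynomial.C U * (Polynomial.X ^ k * (1 - Polynomial.X) ^ l * Du) with hQ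
  have hα' : -1 < α + 2 * (l : ℝ) := by
    have : (0:ℝ) ≤ (l:ℝ) := Nat.cast_nonneg l
    linarith
  have hβ' : -1 < β + 2 * (k : ℝ) := by
    have : (0:ℝ) ≤ (k:ℝ) := Nat.cast_nonneg k
    linarith
  -- divisibility
  have hdvdX : (Polynomial.X : Polynomial ℝ) ^ k ∣ Dc := by
    rcases eq_or_ne Dc 0 with h | h
    · simp [h]
    rcases Nat.eq_zero_or_pos k with hk | hk
    · simp [hk]
    have hlt : k - 1 < Dc.rootMultiplicity 0 := by
      apply Polynomial.lt_rootMultiplicity_of_isRoot_iterate_derivative h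
      intro r hr
      exact h0 r (by omega)
    have hk' : k ≤ Dc.rootMultiplicity 0 := by omega
    have := Polynomial.pow_rootMultiplicity_dvd Dc 0
    simp only [Polynomial.C_0, sub_zero] at this
    exact dvd_trans (pow_dvd_pow _ hk') this
  have hdvd1 : ((1 : Polynomial ℝ) - Polynomial.X) ^ l ∣ Dc := by
    rcases eq_or_ne Dc 0 with h | h
    · simp [h]
    rcases Nat.eq_zero_or_pos l with hl | hl
    · simp [hl]
    have hlt : l - 1 < Dc.rootMultiplicity 1 := by
      apply Polynomial.lt_rootMultiplicity_of_isRoot_iterate_derivative h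
      intro r hr
      exact h1 r (by omega)
    have hl' : l ≤ Dc.rootMultiplicity 1 := by omega
    have hdd := Polynomial.pow_rootMultiplicity_dvd Dc 1
    refine dvd_trans ?_ (dvd_trans (pow_dvd_pow _ hl') hdd)
    apply pow_dvd_pow_of_dvd
    exact ⟨-1, by rw [Polynomial.C_1]; ring⟩
  have hdvdXQ : (Polynomial.X : Polynomial ℝ) ^ k ∣ Q :=
    ⟨Polynomial.C U * ((1 - Polynomial.X) ^ l * Du), by rw [hQ]; ring⟩
  have hdvd1Q : ((1 : Polynomial ℝ) - Polynomial.X) ^ l ∣ Q :=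
    ⟨Polynomial.C U * (Polynomial.X ^ k * Du), by rw [hQ]; ring⟩
  have hcop : IsCoprime ((Polynomial.X : Polynomial ℝ) ^ k) ((1 - Polynomial.X) ^ l) := by
    apply IsCoprime.pow
    exact ⟨1, 1, by ring⟩
  have hdvd : (Polynomial.X : Polynomial ℝ) ^ k * (1 - Polynomial.X) ^ l ∣ Dc - Q :=
    hcop.mul_dvd (dvd_sub hdvdX hdvdXQ) (dvd_sub hdvd1 hdvd1Q)
  obtain ⟨R, hR⟩ := hdvd
  -- degree bound
  have hXne : (Polynomial.X : Polynomial ℝ) ^ k ≠ 0 := pow_ne_zero _ Polynomial.X_ne_zero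
  have h1Xne : ((1 : Polynomial ℝ) - Polynomial.X) ^ l ≠ 0 := by
    apply pow_ne_zero
    intro h
    have := congrArg (Polynomial.eval 0) h
    simp at this
  have hdegQ : Q.natDegree ≤ n := by
    rw [hQ]
    refine le_trans (Polynomial.natDegree_mul_le) ?_
    have h2 : ((Polynomial.X : Polynomial ℝ) ^ k * (1 - Polynomial.X) ^ l * Du).natDegree
        ≤ k + l + m := by
      refine le_trans (Polynomial.natDegree_mul_le) ?_
      have h3 : ((Polynomial.X : Polynomial ℝ) ^ k * (1 - Polynomial.X) ^ l).natDegree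
          ≤ k + l := by
        refine le_trans (Polynomial.natDegree_mul_le) ?_
        have h4 : ((Polynomial.X : Polynomial ℝ) ^ k).natDegree ≤ k := by
          simp [Polynomial.natDegree_X_pow]
        have h5 : (((1 : Polynomial ℝ) - Polynomial.X) ^ l).natDegree ≤ l := by
          refine le_trans (Polynomial.natDegree_pow_le) ?_
          have : ((1 : Polynomial ℝ) - Polynomial.X).natDegree ≤ 1 :=
            le_trans (Polynomial.natDegree_sub_le _ _) (by simp)
          calc l * ((1 : Polynomial ℝ) - Polynomial.X).natDegree ≤ l * 1 :=
                Nat.mul_le_mul_left l this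
            _ = l := mul_one l
        omega
      omega
    have h6 : (Polynomial.C U).natDegree = 0 := Polynomial.natDegree_C U
    omega
  have hdegR : R.natDegree ≤ m := by
    rcases eq_or_ne R 0 with h | h
    · simp [h]
    have hP : (Dc - Q).natDegree ≤ n :=
      le_trans (Polynomial.natDegree_sub_le _ _) (max_le hdeg hdegQ)
    rw [hR] at hP
    rw [Polynomial.natDegree_mul (mul_ne_zero hXne h1Xne) h,
      Polynomial.natDegree_mul hXne h1Xne] at hP
    have hdX : ((Polynomial.X : Polynomial ℝ) ^ k).natDegree = k := Polynomial.natDegree_X_pow k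
    have hd1 : (((1 : Polynomial ℝ) - Polynomial.X) ^ l).natDegree = l := by
      rw [Polynomial.natDegree_pow]
      have : ((1 : Polynomial ℝ) - Polynomial.X).natDegree = 1 := by
        have : (1 : Polynomial ℝ) - Polynomial.X = -(Polynomial.X - Polynomial.C 1) := by
          rw [Polynomial.C_1]; ring
        rw [this, Polynomial.natDegree_neg, Polynomial.natDegree_X_sub_C]
      rw [this, mul_one]
    rw [hdX, hd1] at hP
    omega
  -- continuity facts
  have hcDc : Continuous fun y : ℝ => Dc.eval y := Dc.continuous
  have hcQ : Continuous fun y : ℝ => Q.eval y := Q.continuous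
  have hcR : Continuous fun y : ℝ => R.eval y := R.continuous
  -- the dual conditions for R
  have hzero : ∀ s ≤ m,
      jip (α + 2 * l) (β + 2 * k) (fun y => R.eval y) (bern m s) = 0 := by
    intro s hs
    have hj2 : s + k ≤ n - l := by omega
    have hred := jip_reduce α β n k l m s hmn hs (fun y => R.eval y)
    have heval : (fun y : ℝ => y ^ k * (1 - y) ^ l * R.eval y)
        = fun y => Dc.eval y - Q.eval y := by
      funext y
      have h5 := congrArg (Polynomial.eval y) hR
      simp only [Polynomial.eval_sub, Polynomial.eval_mul, Polynomial.eval_pow,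
        Polynomial.eval_one, Polynomial.eval_X, Polynomial.eval_sub] at h5
      linarith [h5]
    rw [heval] at hred
    have hsplit : jip α β (fun y => Dc.eval y - Q.eval y) (bern n (s + k))
        = jip α β (fun y => Dc.eval y) (bern n (s + k))
          - jip α β (fun y => Q.eval y) (bern n (s + k)) :=
      jip_sub α β hα hβ hcDc hcQ (bern_continuous n (s + k))
    have hQeval : (fun y : ℝ => Q.eval y)
        = fun y => U * (y ^ k * (1 - y) ^ l * Du.eval y) := by
      funext y
      simp [hQ, mul_assoc]
    have hjQ : jip α β (fun y => Q.eval y) (bern n (s + k))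
        = U * (((n.choose (s + k) : ℝ) / (m.choose s : ℝ)) *
            (if i - k = s then 1 else 0)) := by
      rw [hQeval, jip_const_mul, jip_reduce α β n k l m s hmn hs, hdualu s hs]
    have hjDc : jip α β (fun y => Dc.eval y) (bern n (s + k))
        = if i = s + k then 1 else 0 := hdual (s + k) (by omega) hj2
    have hCns : (n.choose (s + k) : ℝ) ≠ 0 :=
      Nat.cast_ne_zero.mpr (Nat.choose_pos (by omega)).ne'
    have hCms : (m.choose s : ℝ) ≠ 0 := Nat.cast_ne_zero.mpr (Nat.choose_pos hs).ne'
    have hLHS0 : jip α β (fun y => Dc.eval y - Q.eval y) (bern n (s + k)) = 0 := by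
      rw [hsplit, hjDc, hjQ]
      by_cases hcase : i = s + k
      · have hik2 : i - k = s := by omega
        rw [if_pos hcase, if_pos hik2, hU]
        have : s + k = i := hcase.symm
        rw [this]
        have hmik : m.choose s = m.choose (i - k) := by rw [← hik2]
        field_simp
        rw [hmik]
        ring
      · have hik2 : ¬ (i - k = s) := by omega
        rw [if_neg hcase, if_neg hik2]
        ring
    rw [hLHS0] at hred
    have h7 : ((n.choose (s + k) : ℝ) / (m.choose s : ℝ)) ≠ 0 := div_ne_zero hCns hCms
    exact (mul_eq_zero.mp hred.symm).resolve_left h7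
  -- dual against monomials
  have hmono : ∀ j ≤ m,
      (∫ y in (0:ℝ)..1, (1 - y) ^ (α + 2 * (l:ℝ)) * y ^ (β + 2 * (k:ℝ))
          * R.eval y * y ^ j) = 0 := by
    intro j hj
    have hfe : (fun y : ℝ => (1 - y) ^ (α + 2 * (l:ℝ)) * y ^ (β + 2 * (k:ℝ))
          * R.eval y * y ^ j)
        = fun y => ∑ t ∈ Finset.range (m - j + 1),
            (((m - j).choose t : ℝ) / (m.choose (t + j) : ℝ)) *
              ((1 - y) ^ (α + 2 * (l:ℝ)) * y ^ (β + 2 * (k:ℝ)) * R.eval y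
                * bern m (t + j) y) := by
      funext y
      rw [bern_expand m j hj y, Finset.mul_sum]
      apply Finset.sum_congr rfl
      intro t ht
      ring
    rw [hfe, intervalIntegral.integral_finset_sum]
    · apply Finset.sum_eq_zero
      intro t ht
      rw [Finset.mem_range] at ht
      have htj : t + j ≤ m := by omega
      rw [intervalIntegral.integral_const_mul]
      have := hzero (t + j) htj
      unfold jip at this
      rw [this, mul_zero]
    · intro t ht
      exact (jipInt _ _ hα' hβ' hcR (bern_continuous m (t + j))).const_mul _
  -- jip R R = 0
  have hRR : (∫ y in (0:ℝ)..1, (1 - y) ^ (α + 2 * (l:ℝ)) * y ^ (β + 2 * (k:ℝ))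
      * R.eval y * R.eval y) = 0 := by
    have hfe : (fun y : ℝ => (1 - y) ^ (α + 2 * (l:ℝ)) * y ^ (β + 2 * (k:ℝ))
          * R.eval y * R.eval y)
        = fun y => ∑ j ∈ Finset.range (m + 1),
            R.coeff j * ((1 - y) ^ (α + 2 * (l:ℝ)) * y ^ (β + 2 * (k:ℝ)) * R.eval y
              * y ^ j) := by
      funext y
      nth_rewrite 2 [Polynomial.eval_eq_sum_range' (Nat.lt_succ_of_le hdegR) y]
      rw [Finset.mul_sum]
      apply Finset.sum_congr rfl
      intro j hjr
      ring
    rw [hfe, intervalIntegral.integral_finset_sum]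
    · apply Finset.sum_eq_zero
      intro j hjr
      rw [Finset.mem_range] at hjr
      rw [intervalIntegral.integral_const_mul, hmono j (by omega), mul_zero]
    · intro j hjr
      exact (jipInt _ _ hα' hβ' hcR (continuous_pow j)).const_mul _
  -- conclude R = 0
  have hR0 : R = 0 := by
    by_contra hne
    set f : ℝ → ℝ := fun y => (1 - y) ^ (α + 2 * (l:ℝ)) * y ^ (β + 2 * (k:ℝ))
      * R.eval y * R.eval y with hf
    have hint : IntervalIntegrable f volume 0 1 :=
      jipInt _ _ hα' hβ' hcR hcR
    have hset : (∫ y in Set.Ioc (0:ℝ) 1, f y) = 0 := by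
      rw [← intervalIntegral.integral_of_le (by norm_num : (0:ℝ) ≤ 1)]
      exact hRR
    have hnn : 0 ≤ᵐ[volume.restrict (Set.Ioc (0:ℝ) 1)] f := by
      have hmem : ∀ᵐ y ∂(volume.restrict (Set.Ioc (0:ℝ) 1)), y ∈ Set.Ioc (0:ℝ) 1 :=
        MeasureTheory.ae_restrict_mem measurableSet_Ioc
      filter_upwards [hmem] with y hy
      show (0:ℝ) ≤ f y
      have h1y : (0:ℝ) ≤ 1 - y := by linarith [hy.2]
      have hy0 : (0:ℝ) ≤ y := le_of_lt hy.1
      have : f y = ((1 - y) ^ (α + 2 * (l:ℝ)) * y ^ (β + 2 * (k:ℝ)))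
          * (R.eval y * R.eval y) := by rw [hf]; ring
      rw [this]
      exact mul_nonneg (mul_nonneg (Real.rpow_nonneg h1y _) (Real.rpow_nonneg hy0 _))
        (mul_self_nonneg _)
    have haez : f =ᵐ[volume.restrict (Set.Ioc (0:ℝ) 1)] 0 :=
      (MeasureTheory.integral_eq_zero_iff_of_nonneg_ae hnn hint.1).mp hset
    have hae : ∀ᵐ y : ℝ, y ∈ Set.Ioc (0:ℝ) 1 → f y = 0 :=
      (MeasureTheory.ae_restrict_iff' measurableSet_Ioc).mp haez
    have hfin : {y : ℝ | R.IsRoot y}.Finite := by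
      by_contra h
      exact hne (R.eq_zero_of_infinite_isRoot h)
    have hroots : ∀ᵐ y : ℝ, R.eval y ≠ 0 := by
      rw [MeasureTheory.ae_iff]
      have he : {y : ℝ | ¬ R.eval y ≠ 0} = {y : ℝ | R.IsRoot y} := by
        ext y; simp [Polynomial.IsRoot]
      rw [he]
      exact hfin.measure_zero _
    have hcon : ∀ᵐ y : ℝ, y ∉ Set.Ioo (0:ℝ) 1 := by
      filter_upwards [hae, hroots] with y hy1 hy2 hy
      have hfy : f y = 0 := hy1 ⟨hy.1, le_of_lt hy.2⟩
      have hw1 : (1 - y) ^ (α + 2 * (l:ℝ)) ≠ 0 :=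
        (Real.rpow_pos_of_pos (by linarith [hy.2]) _).ne'
      have hw2 : y ^ (β + 2 * (k:ℝ)) ≠ 0 :=
        (Real.rpow_pos_of_pos hy.1 _).ne'
      exact (mul_ne_zero (mul_ne_zero (mul_ne_zero hw1 hw2) hy2) hy2) hfy
    have hv : volume (Set.Ioo (0:ℝ) 1) = 0 := by
      rw [MeasureTheory.ae_iff] at hcon
      simp only [not_not, Set.setOf_mem_eq] at hcon
      exact hcon
    rw [Real.volume_Ioo] at hv
    norm_num at hv
  -- finish
  have hDcQ : Dc = Q := by
    have : Dc - Q = 0 := by rw [hR, hR0, mul_zero]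
    exact sub_eq_zero.mp this
  have := congrArg (Polynomial.eval x) hDcQ
  simp only [hQ, Polynomial.eval_mul, Polynomial.eval_C, Polynomial.eval_pow,
    Polynomial.eval_sub, Polynomial.eval_one, Polynomial.eval_X] at this
  rw [this, hU]
  ring
end
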